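/- In a restriction category with restriction coproducts and a restriction zero, for a map h : A → A + A the following are equivalent: (i) h is its own decision; (ii) h is a decision of some map; (iii) h has a restriction inverse g : A + A → A such that both composites g ∘ i₁ and g ∘ i₂ with the coproduct injections are restriction idempotents. -/

import Mathlib

open CategoryTheory CategoryTheory.Limits

universe v u

/-- A restriction category: a category with an operation assigning to each
morphism `f : A ⟶ B` a morphism `ρ f : A ⟶ A` satisfying axioms R.1–R.4.
(Composition is written diagrammatically: `f ≫ g` is "first `f`, then `g`",
so the paper's `g ∘ f` is `f ≫ g`.) -/
class RestrictionCategory (C : Type u) [Category.{v} C] where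
  ρ : ∀ {A B : C}, (A ⟶ B) → (A ⟶ A)
  R1 : ∀ {A B : C} (f : A ⟶ B), ρ f ≫ f = f
  R2 : ∀ {A B D : C} (f : A ⟶ B) (g : A ⟶ D), ρ f ≫ ρ g = ρ g ≫ ρ f
  R3 : ∀ {A B D : C} (f : A ⟶ B) (g : A ⟶ D), ρ (ρ f ≫ g) = ρ f ≫ ρ g
  R4 : ∀ {A B D : C} (f : A ⟶ B) (g : B ⟶ D), f ≫ ρ g = ρ (f ≫ g) ≫ f

open RestrictionCategory

open ZeroObject

variable {C : Type u} [Category.{v} C] [RestrictionCategory C]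
  [HasBinaryCoproducts C] [HasZeroObject C] [HasZeroMorphisms C]

/-- The restriction retraction `⟨1|0⟩ : A ⨿ B ⟶ A` of the first injection. -/
noncomputable def iStar (A B : C) : (A ⨿ B) ⟶ A := coprod.desc (𝟙 A) 0

/-- The restriction retraction `⟨0|1⟩ : A ⨿ B ⟶ B` of the second injection. -/
noncomputable def jStar (A B : C) : (A ⨿ B) ⟶ B := coprod.desc 0 (𝟙 B)

/-- `h : A ⟶ A ⨿ A` is a decision for `f : A ⟶ B ⨿ D` if it is restriction
inverse to `⟨overline{i* f} | overline{j* f}⟩ : A ⨿ A ⟶ A` and `ρ h = ρ f`. -/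
def IsDecision {A B D : C} (f : A ⟶ B ⨿ D) (h : A ⟶ A ⨿ A) : Prop :=
  coprod.desc (ρ (f ≫ iStar B D)) (ρ (f ≫ jStar B D)) ≫ h =
    ρ (coprod.desc (ρ (f ≫ iStar B D)) (ρ (f ≫ jStar B D))) ∧
  h ≫ coprod.desc (ρ (f ≫ iStar B D)) (ρ (f ≫ jStar B D)) = ρ h ∧
  ρ h = ρ f


section Aux

variable {C : Type u} [Category.{v} C] [RestrictionCategory C]
  [HasBinaryCoproducts C] [HasZeroObject C] [HasZeroMorphisms C]

omit [HasBinaryCoproducts C] [HasZeroObject C] [HasZeroMorphisms C] in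
lemma rho_id (A : C) : ρ (𝟙 A) = 𝟙 A := by
  have := R1 (𝟙 A); simpa using this

omit [HasBinaryCoproducts C] [HasZeroObject C] [HasZeroMorphisms C] in
lemma rho_rho {A B : C} (f : A ⟶ B) : ρ (ρ f) = ρ f := by
  have := R3 f (𝟙 A)
  simpa [rho_id] using this

omit [HasBinaryCoproducts C] [HasZeroObject C] [HasZeroMorphisms C] in
lemma rho_comp_le {A B D : C} (f : A ⟶ B) (g : B ⟶ D) :
    ρ (f ≫ g) ≫ ρ f = ρ (f ≫ g) := by
  have h1 : ρ (f ≫ g) ≫ ρ f = ρ f ≫ ρ (f ≫ g) := (R2 f (f ≫ g)).symm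
  have h2 : ρ f ≫ ρ (f ≫ g) = ρ (ρ f ≫ (f ≫ g)) := (R3 f (f ≫ g)).symm
  have h3 : ρ f ≫ (f ≫ g) = f ≫ g := by rw [← Category.assoc, R1]
  rw [h1, h2, h3]

omit [HasZeroObject C] [HasZeroMorphisms C] in
/-- Key computation: under the hypotheses of (iii), the restriction of `h ≫ p`
equals the idempotent `ι ≫ g`. -/
lemma gen_decision {A : C} (h : A ⟶ A ⨿ A) (g : A ⨿ A ⟶ A)
    (p : A ⨿ A ⟶ A) (ι : A ⟶ A ⨿ A)
    (hg : h ≫ g = ρ h) (gh : g ≫ h = ρ g)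
    (he : ρ (ι ≫ g) = ι ≫ g)
    (hιp : ι ≫ p = 𝟙 A)
    (hq : (ρ p ≫ g) ≫ (ι ≫ g) = ρ p ≫ g) :
    ρ (h ≫ p) = ι ≫ g := by
  -- (ι ≫ g) ≫ h = (ι ≫ g) ≫ ι
  have step1 : (ι ≫ g) ≫ h = (ι ≫ g) ≫ ι := by
    calc (ι ≫ g) ≫ h = ι ≫ (g ≫ h) := by rw [Category.assoc]
      _ = ι ≫ ρ g := by rw [gh]
      _ = ρ (ι ≫ g) ≫ ι := R4 ι g
      _ = (ι ≫ g) ≫ ι := by rw [he]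
  have h3 : ρ (ι ≫ g) ≫ (h ≫ p) = ι ≫ g := by
    rw [he, ← Category.assoc, step1, Category.assoc, hιp, Category.comp_id]
  -- (ι ≫ g) ≫ ρ (h ≫ p) = ι ≫ g
  have step2 : (ι ≫ g) ≫ ρ (h ≫ p) = ι ≫ g := by
    have t := R3 (ι ≫ g) (h ≫ p)
    rw [h3, he] at t
    exact t.symm
  -- ρ (h ≫ p) = h ≫ (ρ p ≫ g)
  have step3 : ρ (h ≫ p) = h ≫ (ρ p ≫ g) := by
    calc ρ (h ≫ p) = ρ (h ≫ p) ≫ ρ h := (rho_comp_le h p).symm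
      _ = ρ (h ≫ p) ≫ (h ≫ g) := by rw [hg]
      _ = (ρ (h ≫ p) ≫ h) ≫ g := by rw [Category.assoc]
      _ = (h ≫ ρ p) ≫ g := by rw [← R4 h p]
      _ = h ≫ (ρ p ≫ g) := by rw [Category.assoc]
  -- ρ (h ≫ p) ≫ (ι ≫ g) = ρ (h ≫ p)
  have step4 : ρ (h ≫ p) ≫ (ι ≫ g) = ρ (h ≫ p) := by
    rw [step3, Category.assoc, hq]
  -- they commute
  have step5 : (ι ≫ g) ≫ ρ (h ≫ p) = ρ (h ≫ p) ≫ (ι ≫ g) := by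
    have t := R2 (ι ≫ g) (h ≫ p)
    rw [he] at t
    exact t
  calc ρ (h ≫ p) = ρ (h ≫ p) ≫ (ι ≫ g) := step4.symm
    _ = (ι ≫ g) ≫ ρ (h ≫ p) := step5.symm
    _ = ι ≫ g := step2

end Aux

/-- For `h : A ⟶ A ⨿ A` the following are equivalent: (i) `h` is its own
decision; (ii) `h` is a decision of some map; (iii) `h` has a restriction
inverse `g : A ⨿ A ⟶ A` such that both composites of `g` with the coproduct
injections are restriction idempotents. -/
theorem stmt_11
    (htot : ∀ A B : C, ρ (coprod.inl : A ⟶ A ⨿ B) = 𝟙 A ∧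
      ρ (coprod.inr : B ⟶ A ⨿ B) = 𝟙 B)
    (hzero : ∀ A : C, ρ (0 : A ⟶ A) = (0 : A ⟶ A))
    {A : C} (h : A ⟶ A ⨿ A) :
    (IsDecision h h ↔ ∃ (B D : C) (f : A ⟶ B ⨿ D), IsDecision f h) ∧
    ((∃ (B D : C) (f : A ⟶ B ⨿ D), IsDecision f h) ↔
      ∃ g : A ⨿ A ⟶ A, (h ≫ g = ρ h ∧ g ≫ h = ρ g) ∧
        ρ ((coprod.inl : A ⟶ A ⨿ A) ≫ g) = (coprod.inl : A ⟶ A ⨿ A) ≫ g ∧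
        ρ ((coprod.inr : A ⟶ A ⨿ A) ≫ g) = (coprod.inr : A ⟶ A ⨿ A) ≫ g) := by
  have hzA := hzero A
  have two_to_three : (∃ (B D : C) (f : A ⟶ B ⨿ D), IsDecision f h) →
      ∃ g : A ⨿ A ⟶ A, (h ≫ g = ρ h ∧ g ≫ h = ρ g) ∧
        ρ ((coprod.inl : A ⟶ A ⨿ A) ≫ g) = (coprod.inl : A ⟶ A ⨿ A) ≫ g ∧
        ρ ((coprod.inr : A ⟶ A ⨿ A) ≫ g) = (coprod.inr : A ⟶ A ⨿ A) ≫ g := by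
    rintro ⟨B, D, f, H1, H2, H3⟩
    refine ⟨coprod.desc (ρ (f ≫ iStar B D)) (ρ (f ≫ jStar B D)), ⟨H2, H1⟩, ?_, ?_⟩
    · rw [coprod.inl_desc, rho_rho]
    · rw [coprod.inr_desc, rho_rho]
  have three_to_one : (∃ g : A ⨿ A ⟶ A, (h ≫ g = ρ h ∧ g ≫ h = ρ g) ∧
        ρ ((coprod.inl : A ⟶ A ⨿ A) ≫ g) = (coprod.inl : A ⟶ A ⨿ A) ≫ g ∧
        ρ ((coprod.inr : A ⟶ A ⨿ A) ≫ g) = (coprod.inr : A ⟶ A ⨿ A) ≫ g) →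
      IsDecision h h := by
    rintro ⟨g, ⟨hg, gh⟩, he1, he2⟩
    have e1idem := R1 ((coprod.inl : A ⟶ A ⨿ A) ≫ g)
    rw [he1] at e1idem
    have e2idem := R1 ((coprod.inr : A ⟶ A ⨿ A) ≫ g)
    rw [he2] at e2idem
    have rhoi : ρ (iStar A A) = coprod.desc (coprod.inl : A ⟶ A ⨿ A) 0 := by
      apply coprod.hom_ext
      · rw [R4 coprod.inl (iStar A A)]
        have hi : (coprod.inl : A ⟶ A ⨿ A) ≫ iStar A A = 𝟙 A := by unfold iStar; exact coprod.inl_desc _ _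
        rw [hi, rho_id, Category.id_comp, coprod.inl_desc]
      · rw [R4 coprod.inr (iStar A A)]
        have hi : (coprod.inr : A ⟶ A ⨿ A) ≫ iStar A A = 0 := by unfold iStar; exact coprod.inr_desc _ _
        rw [hi, hzA, zero_comp, coprod.inr_desc]
    have rhoj : ρ (jStar A A) = coprod.desc 0 (coprod.inr : A ⟶ A ⨿ A) := by
      apply coprod.hom_ext
      · rw [R4 coprod.inl (jStar A A)]
        have hj : (coprod.inl : A ⟶ A ⨿ A) ≫ jStar A A = 0 := by unfold jStar; exact coprod.inl_desc _ _
        rw [hj, hzA, zero_comp, coprod.inl_desc]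
      · rw [R4 coprod.inr (jStar A A)]
        have hj : (coprod.inr : A ⟶ A ⨿ A) ≫ jStar A A = 𝟙 A := by unfold jStar; exact coprod.inr_desc _ _
        rw [hj, rho_id, Category.id_comp, coprod.inr_desc]
    have key1 : ρ (h ≫ iStar A A) = (coprod.inl : A ⟶ A ⨿ A) ≫ g := by
      apply gen_decision h g (iStar A A) coprod.inl hg gh he1
      · exact coprod.inl_desc _ _
      · rw [rhoi, coprod.desc_comp, coprod.desc_comp, e1idem, zero_comp, zero_comp]
    have key2 : ρ (h ≫ jStar A A) = (coprod.inr : A ⟶ A ⨿ A) ≫ g := by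
      apply gen_decision h g (jStar A A) coprod.inr hg gh he2
      · exact coprod.inr_desc _ _
      · rw [rhoj, coprod.desc_comp, coprod.desc_comp, e2idem, zero_comp, zero_comp]
    have gdesc : coprod.desc (ρ (h ≫ iStar A A)) (ρ (h ≫ jStar A A)) = g := by
      rw [key1, key2]
      apply coprod.hom_ext
      · rw [coprod.inl_desc]
      · rw [coprod.inr_desc]
    exact ⟨by rw [gdesc, gh], by rw [gdesc, hg], rfl⟩
  constructor
  · constructor
    · intro hd; exact ⟨A, A, h, hd⟩
    · intro hex; exact three_to_one (two_to_three hex)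
  · constructor
    · exact two_to_three
    · intro hiii; exact ⟨A, A, h, three_to_one hiii⟩
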